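/- Let (v̄₁, v̄₂), where v̄_i = (v₀^i, v₁^i, ..., v_k^i) for i = 1,2, be a pair of separating walks in G_d. If for some ℓ ∈ {0,1,...,k−1} the node v_{ℓ+1}^i is a child of node v_ℓ^i for both i = 1,2, and π_d(v_ℓ^1, v_{ℓ+1}^1) = π_d(v_ℓ^2, v_{ℓ+1}^2), then (v̄₁, v̄₂) is not a critical pair of separating walks in G_d. -/

import Mathlib

namespace Paper

/-- Nodes of the tree `G_d` are finite sequences of pairs of numbers.
We represent a sequence `(a₁, …, a_i)` as the list `[a_i, …, a₁]`, i.e. in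
reverse order, so that consing corresponds to appending a pair at the end. -/
abbrev Nd : Type := ℕ × ℕ

/-- `b₂⁺`: `1` if `b₂ = 0`, and `b₂` otherwise. -/
def bplus (b : ℕ) : ℕ := if b = 0 then 1 else b

/-- For `j ≥ 1`, the `j`-th smallest element of `{lo, lo+1, lo+2, …} \ {f}`.
This realises the greedy choices `c^j = min({lo,…} \ {f, c¹, …, c^{j-1}})`. -/
def nthAvoid (lo f j : ℕ) : ℕ :=
  if lo + j - 1 < f ∨ f < lo then lo + j - 1 else lo + j

/-- The node set `V_d` of the graph `G_d`, given by the rules (G1)–(G4).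
(Sequences are represented as reversed lists, the head being the last pair
`a_i` of the sequence.) -/
inductive Vd (d : ℕ) : List Nd → Prop
  /-- (G1): the empty sequence is a node. -/
  | nil : Vd d []
  /-- (G2): the sequences `((1,0)), ((2,1)), …, ((d,d−1))` are nodes. -/
  | base (k : ℕ) (h1 : 1 ≤ k) (h2 : k ≤ d) : Vd d [(k, k - 1)]
  /-- (G3): children of a node of odd length `< 2d` with last pair `(b₁, b₂)`:
  for `j = 1, …, d−1` append `(c₁ʲ, c₂ʲ)` where `c₁ʲ` is the `j`-th smallest
  element of `{1,…,d} \ {b₂⁺}` and `c₂ʲ` the `j`-th smallest of `{1,…,d} \ {b₁}`. -/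
  | odd (b₁ b₂ : ℕ) (rest : List Nd)
      (hv : Vd d ((b₁, b₂) :: rest))
      (hodd : Odd ((b₁, b₂) :: rest).length)
      (hlt : ((b₁, b₂) :: rest).length < 2 * d)
      (j : ℕ) (hj1 : 1 ≤ j) (hj2 : j ≤ d - 1) :
      Vd d ((nthAvoid 1 (bplus b₂) j, nthAvoid 1 b₁ j) :: (b₁, b₂) :: rest)
  /-- (G4): children of a node of even positive length `< 2d` with last pair
  `(b₁, b₂)`: for `j = 1, …, d−1` append `(c₁ʲ, c₂ʲ)` where `c₁ʲ` is the `j`-th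
  smallest element of `{1,…,d} \ {b₂}` and `c₂ʲ` the `j`-th smallest of
  `{0,…,d−1} \ {b₁}`. -/
  | even (b₁ b₂ : ℕ) (rest : List Nd)
      (hv : Vd d ((b₁, b₂) :: rest))
      (heven : Even ((b₁, b₂) :: rest).length)
      (hlt : ((b₁, b₂) :: rest).length < 2 * d)
      (j : ℕ) (hj1 : 1 ≤ j) (hj2 : j ≤ d - 1) :
      Vd d ((nthAvoid 1 b₂ j, nthAvoid 0 b₁ j) :: (b₁, b₂) :: rest)

/-- The edge relation of `G_d`: `u` is a child of `v` or vice versa. -/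
def Ed (d : ℕ) (v u : List Nd) : Prop :=
  Vd d v ∧ Vd d u ∧ ∃ a : Nd, u = a :: v ∨ v = a :: u

/-- The outgoing port number `π_d(v, u)` from `v` towards an adjacent node `u`:
if `u = (b₁, b₂) :: v` is a child of `v` then `b₁`, and if `v = (b₁, b₂) :: u`
is a child of `u` then `b₂`. -/
def outPort (v u : List Nd) : ℕ :=
  if u.length = v.length + 1 then u.headI.1 else v.headI.2

/-- A pair of compatible walks (PCW) of length `k` in `G_d`:
two walks starting at `((1,0))` and `((2,1))` such that the outgoing port
numbers backwards along the walks coincide. -/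
structure IsPCW (d k : ℕ) (w₁ w₂ : ℕ → List Nd) : Prop where
  klen : k ≤ 2 * d - 3
  walk₁ : ∀ j < k, Ed d (w₁ j) (w₁ (j + 1))
  walk₂ : ∀ j < k, Ed d (w₂ j) (w₂ (j + 1))
  start₁ : w₁ 0 = [(1, 0)]
  start₂ : w₂ 0 = [(2, 1)]
  compat : ∀ j, 1 ≤ j → j ≤ k →
    outPort (w₁ j) (w₁ (j - 1)) = outPort (w₂ j) (w₂ (j - 1))

/-- A pair of separating walks (PSW): a PCW such that the last node of the
first walk has a neighbour whose outgoing port number towards it is matched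
by no neighbour of the last node of the second walk. -/
structure IsPSW (d k : ℕ) (w₁ w₂ : ℕ → List Nd)
    extends IsPCW d k w₁ w₂ : Prop where
  sep : ∃ x, Ed d (w₁ k) x ∧
    ∀ y, Ed d (w₂ k) y → outPort x (w₁ k) ≠ outPort y (w₂ k)

/-- A PSW of length `k` in `G_d` is critical if there is no strictly shorter
PSW in `G_d`. -/
def IsCriticalPSW (d k : ℕ) (w₁ w₂ : ℕ → List Nd) : Prop :=
  IsPSW d k w₁ w₂ ∧ ∀ k' w₁' w₂', IsPSW d k' w₁' w₂' → k ≤ k'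

/- ### Auxiliary lemmas -/

lemma Ed_elim {d : ℕ} {v u : List Nd} (h : Ed d v u) :
    Vd d v ∧ Vd d u ∧ ∃ a : Nd, u = a :: v ∨ v = a :: u := h

lemma Ed_intro {d : ℕ} {v u : List Nd} (h1 : Vd d v) (h2 : Vd d u) (a : Nd)
    (h : u = a :: v ∨ v = a :: u) : Ed d v u := ⟨h1, h2, a, h⟩

lemma nthAvoid_ne (lo f j : ℕ) (hj : 1 ≤ j) : nthAvoid lo f j ≠ f := by
  unfold nthAvoid; split <;> omega

lemma nthAvoid_inj (lo f : ℕ) {j j' : ℕ} (hj : 1 ≤ j) (hj' : 1 ≤ j')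
    (h : nthAvoid lo f j = nthAvoid lo f j') : j = j' := by
  unfold nthAvoid at h; split at h <;> split at h <;> omega

/-- The `j`-th child pair appended below a node `x` (uniform form of (G3)/(G4)). -/
def childPair (x : List Nd) (j : ℕ) : Nd :=
  if Odd x.length then (nthAvoid 1 (bplus x.headI.2) j, nthAvoid 1 x.headI.1 j)
  else (nthAvoid 1 x.headI.2 j, nthAvoid 0 x.headI.1 j)

lemma childPair_snd (x : List Nd) (j : ℕ) :
    (childPair x j).2 = nthAvoid (if Odd x.length then 1 else 0) x.headI.1 j := by
  unfold childPair
  by_cases h : Odd x.length <;> simp [h]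

lemma childPair_congr {x y : List Nd} (hh : x.headI = y.headI)
    (hp : Odd x.length ↔ Odd y.length) (j : ℕ) :
    childPair x j = childPair y j := by
  unfold childPair
  by_cases h : Odd x.length
  · rw [if_pos h, if_pos (hp.mp h), hh]
  · rw [if_neg h, if_neg (fun hy => h (hp.mpr hy)), hh]

lemma child_det {x y : List Nd} (hh : x.headI = y.headI)
    (hp : Odd x.length ↔ Odd y.length) {j₁ j₂ : ℕ} (hj₁ : 1 ≤ j₁) (hj₂ : 1 ≤ j₂)
    (h : (childPair x j₁).2 = (childPair y j₂).2) :
    childPair x j₁ = childPair y j₂ := by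
  have hiff : (if Odd x.length then (1 : ℕ) else 0) =
      (if Odd y.length then (1 : ℕ) else 0) := by
    by_cases hc : Odd x.length
    · rw [if_pos hc, if_pos (hp.mp hc)]
    · rw [if_neg hc, if_neg (fun hy' => hc (hp.mpr hy'))]
  rw [childPair_snd, childPair_snd, hh, ← hiff] at h
  have hj := nthAvoid_inj _ _ hj₁ hj₂ h
  rw [childPair_congr hh hp j₁, hj]

lemma Vd_cons {d : ℕ} {c : Nd} {x : List Nd} (h : Vd d (c :: x)) :
    Vd d x ∧ (x = [] ∨
      ∃ j, 1 ≤ j ∧ j ≤ d - 1 ∧ x.length < 2 * d ∧ c = childPair x j) := by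
  cases h with
  | base k h1 h2 => exact ⟨Vd.nil, Or.inl rfl⟩
  | odd b₁ b₂ rest hv hodd hlt j hj1 hj2 =>
      refine ⟨hv, Or.inr ⟨j, hj1, hj2, hlt, ?_⟩⟩
      have h' : Odd (rest.length + 1) := by simpa using hodd
      simp [childPair, h']
  | even b₁ b₂ rest hv heven hlt j hj1 hj2 =>
      refine ⟨hv, Or.inr ⟨j, hj1, hj2, hlt, ?_⟩⟩
      have h' : ¬ Odd (rest.length + 1) := by
        rw [Nat.not_odd_iff_even]; simpa using heven
      simp [childPair, h']

lemma Vd_child {d : ℕ} {x : List Nd} (hx : Vd d x) (hne : x ≠ [])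
    (hlt : x.length < 2 * d) {j : ℕ} (hj1 : 1 ≤ j) (hj2 : j ≤ d - 1) :
    Vd d (childPair x j :: x) := by
  obtain ⟨⟨b₁, b₂⟩, rest, rfl⟩ := List.exists_cons_of_ne_nil hne
  by_cases hodd : Odd (rest.length + 1)
  · have hodd' : Odd (((b₁, b₂) : Nd) :: rest).length := by simpa using hodd
    simpa [childPair, hodd] using Vd.odd b₁ b₂ rest hx hodd' hlt j hj1 hj2
  · have heven' : Even (((b₁, b₂) : Nd) :: rest).length := by
      simpa using Nat.not_odd_iff_even.mp hodd
    simpa [childPair, hodd] using Vd.even b₁ b₂ rest hx heven' hlt j hj1 hj2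

lemma outPort_down (a : Nd) (v : List Nd) : outPort v (a :: v) = a.1 := by
  have h : (a :: v).length = v.length + 1 := List.length_cons
  unfold outPort
  rw [if_pos h]
  rfl

lemma outPort_up (a : Nd) (v : List Nd) : outPort (a :: v) v = a.2 := by
  have h : ¬ (v.length = (a :: v).length + 1) := by
    rw [List.length_cons]; omega
  unfold outPort
  rw [if_neg h]
  rfl

lemma walk_len {d k : ℕ} {w : ℕ → List Nd} (h0 : (w 0).length = 1)
    (hw : ∀ j < k, Ed d (w j) (w (j + 1))) :
    ∀ j ≤ k, (w j).length % 2 = (j + 1) % 2 ∧ (w j).length ≤ j + 1 := by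
  intro j
  induction j with
  | zero => intro _; simp [h0]
  | succ n ih =>
      intro hj
      have hn := ih (by omega)
      obtain ⟨-, -, a, hc⟩ := Ed_elim (hw n (by omega))
      rcases hc with h | h
      · have he : (w (n + 1)).length = (w n).length + 1 := by rw [h]; simp
        omega
      · have he : (w n).length = (w (n + 1)).length + 1 := by rw [h]; simp
        omega
/-- If in a PSW both walks step from position `ℓ` to a child with identical
outgoing port numbers from the parents, then the PSW is not critical. -/
theorem PSW_not_critical_of_identical_edges (d k : ℕ) (hd : 2 ≤ d)
    (w₁ w₂ : ℕ → List Nd) (hpsw : IsPSW d k w₁ w₂)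
    (ℓ : ℕ) (hℓ : ℓ < k)
    (hc₁ : ∃ a : Nd, w₁ (ℓ + 1) = a :: w₁ ℓ)
    (hc₂ : ∃ a : Nd, w₂ (ℓ + 1) = a :: w₂ ℓ)
    (hport : outPort (w₁ ℓ) (w₁ (ℓ + 1)) = outPort (w₂ ℓ) (w₂ (ℓ + 1))) :
    ¬ IsCriticalPSW d k w₁ w₂ := by
  intro hcrit
  unfold IsCriticalPSW at hcrit
  obtain ⟨-, hmin⟩ := hcrit
  obtain ⟨a, ha1⟩ := hc₁
  obtain ⟨a', ha2⟩ := hc₂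
  have hk1 : 1 ≤ k := by omega
  -- the appended pairs are equal
  have hfst : a.1 = a'.1 := by
    have e1 : outPort (w₁ ℓ) (w₁ (ℓ + 1)) = a.1 := by rw [ha1, outPort_down]
    have e2 : outPort (w₂ ℓ) (w₂ (ℓ + 1)) = a'.1 := by rw [ha2, outPort_down]
    rw [e1, e2] at hport; exact hport
  have hsnd : a.2 = a'.2 := by
    have hc := hpsw.compat (ℓ + 1) (by omega) (by omega)
    simp only [Nat.add_sub_cancel] at hc
    rw [ha1, ha2, outPort_up, outPort_up] at hc
    exact hc
  have haa : a' = a := by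
    obtain ⟨a1, a2⟩ := a; obtain ⟨b1, b2⟩ := a'
    simp only [Prod.mk.injEq]
    exact ⟨hfst.symm, hsnd.symm⟩
  rw [haa] at ha2
  -- basic facts about the walks
  have hVk2 : Vd d (w₂ k) := by
    have h := (Ed_elim (hpsw.walk₂ (k - 1) (by omega))).2.1
    rwa [show k - 1 + 1 = k by omega] at h
  have hL1 := walk_len (by rw [hpsw.start₁]; rfl) hpsw.walk₁
  have hL2 := walk_len (by rw [hpsw.start₂]; rfl) hpsw.walk₂
  have hpar : ∀ j ≤ k, (Odd (w₁ j).length ↔ Odd (w₂ j).length) := by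
    intro j hj
    have h1 := (hL1 j hj).1
    have h2 := (hL2 j hj).1
    rw [Nat.odd_iff, Nat.odd_iff, h1, h2]
  -- key invariant: after the identical edge, the walks move in lockstep with
  -- a common stack `σ` above their position-`ℓ` nodes, until (possibly) they
  -- simultaneously return to their position-`ℓ` nodes.
  have key : ∀ j, ℓ + 1 ≤ j → j ≤ k →
      (∃ σ : List Nd, σ ≠ [] ∧ w₁ j = σ ++ w₁ ℓ ∧ w₂ j = σ ++ w₂ ℓ) ∨
      (∃ t, ℓ + 1 ≤ t ∧ t ≤ j ∧ w₁ t = w₁ ℓ ∧ w₂ t = w₂ ℓ) := by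
    intro j hj
    induction j, hj using Nat.le_induction with
    | base =>
        intro _
        exact Or.inl ⟨[a], by simp, ha1, ha2⟩
    | succ n hn ih =>
        intro hnk
        rcases ih (by omega) with ⟨σ, hσ, h1, h2⟩ | ⟨t, ht1, ht2, ht3, ht4⟩
        · obtain ⟨h0, σ', rfl⟩ : ∃ h0 σ', σ = h0 :: σ' := by
            cases σ with
            | nil => exact absurd rfl hσ
            | cons p q => exact ⟨p, q, rfl⟩
          simp only [List.cons_append] at h1 h2
          have hcompat := hpsw.compat (n + 1) (by omega) (by omega)
          simp only [Nat.add_sub_cancel] at hcompat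
          obtain ⟨-, hVn1, c₁, hc1⟩ := Ed_elim (hpsw.walk₁ n (by omega))
          obtain ⟨-, hVn2, c₂, hc2⟩ := Ed_elim (hpsw.walk₂ n (by omega))
          have hh1 : (w₁ n).headI = h0 := by rw [h1]; rfl
          have hh2 : (w₂ n).headI = h0 := by rw [h2]; rfl
          have hne1 : w₁ n ≠ [] := by rw [h1]; simp
          have hne2 : w₂ n ≠ [] := by rw [h2]; simp
          rcases hc1 with hdn1 | hup1 <;> rcases hc2 with hdn2 | hup2
          · -- both walks go down: same child pair is appended
            obtain ⟨-, hinv1⟩ := Vd_cons (hdn1 ▸ hVn1)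
            obtain ⟨-, hinv2⟩ := Vd_cons (hdn2 ▸ hVn2)
            rcases hinv1 with h | ⟨j₁, hj₁, -, -, hcp₁⟩
            · exact absurd h hne1
            rcases hinv2 with h | ⟨j₂, hj₂, -, -, hcp₂⟩
            · exact absurd h hne2
            have hp : c₁.2 = c₂.2 := by
              rw [hdn1, hdn2, outPort_up, outPort_up] at hcompat
              exact hcompat
            have hcc : c₁ = c₂ := by
              rw [hcp₁, hcp₂]
              exact child_det (hh1.trans hh2.symm) (hpar n (by omega)) hj₁ hj₂
                (by rw [← hcp₁, ← hcp₂]; exact hp)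
            refine Or.inl ⟨c₁ :: h0 :: σ', by simp, ?_, ?_⟩
            · rw [hdn1, h1, List.cons_append, List.cons_append]
            · rw [hdn2, h2, hcc, List.cons_append, List.cons_append]
          · -- walk 1 down, walk 2 up: impossible
            exfalso
            obtain ⟨-, hinv1⟩ := Vd_cons (hdn1 ▸ hVn1)
            rcases hinv1 with h | ⟨j₁, hj₁, -, -, hcp₁⟩
            · exact hne1 h
            have hp1 : outPort (w₁ (n + 1)) (w₁ n) = c₁.2 := by
              rw [hdn1, outPort_up]
            have hp2 : outPort (w₂ (n + 1)) (w₂ n) = c₂.1 := by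
              rw [hup2, outPort_down]
            rw [hp1, hp2] at hcompat
            have hch : c₂ = h0 := by
              have e : c₂ :: w₂ (n + 1) = h0 :: (σ' ++ w₂ ℓ) := by rw [← hup2, h2]
              injection e with e' _
            have e1 := childPair_snd (w₁ n) j₁
            rw [← hcp₁, hh1] at e1
            rw [e1, hch] at hcompat
            exact nthAvoid_ne _ _ _ hj₁ hcompat
          · -- walk 1 up, walk 2 down: impossible
            exfalso
            obtain ⟨-, hinv2⟩ := Vd_cons (hdn2 ▸ hVn2)
            rcases hinv2 with h | ⟨j₂, hj₂, -, -, hcp₂⟩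
            · exact hne2 h
            have hp1 : outPort (w₁ (n + 1)) (w₁ n) = c₁.1 := by
              rw [hup1, outPort_down]
            have hp2 : outPort (w₂ (n + 1)) (w₂ n) = c₂.2 := by
              rw [hdn2, outPort_up]
            rw [hp1, hp2] at hcompat
            have hch : c₁ = h0 := by
              have e : c₁ :: w₁ (n + 1) = h0 :: (σ' ++ w₁ ℓ) := by rw [← hup1, h1]
              injection e with e' _
            have e2 := childPair_snd (w₂ n) j₂
            rw [← hcp₂, hh2] at e2
            rw [e2, hch] at hcompat
            exact nthAvoid_ne _ _ _ hj₂ hcompat.symm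
          · -- both walks go up
            have e1 : c₁ :: w₁ (n + 1) = h0 :: (σ' ++ w₁ ℓ) := by rw [← hup1, h1]
            have e2 : c₂ :: w₂ (n + 1) = h0 :: (σ' ++ w₂ ℓ) := by rw [← hup2, h2]
            injection e1 with e1h e1t
            injection e2 with e2h e2t
            cases σ' with
            | nil =>
                exact Or.inr ⟨n + 1, by omega, le_refl _,
                  by simpa using e1t, by simpa using e2t⟩
            | cons p q =>
                exact Or.inl ⟨p :: q, by simp, e1t, e2t⟩
        · exact Or.inr ⟨t, ht1, by omega, ht3, ht4⟩
  rcases key k (by omega) le_rfl with ⟨σ, hσ, h1, h2⟩ | ⟨t, ht1, ht2, ht3, ht4⟩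
  · -- Case A: the end nodes have the same head and parity, so no separation
    obtain ⟨h0, σ', rfl⟩ : ∃ h0 σ', σ = h0 :: σ' := by
      cases σ with
      | nil => exact absurd rfl hσ
      | cons p q => exact ⟨p, q, rfl⟩
    simp only [List.cons_append] at h1 h2
    obtain ⟨x, hx, hsep⟩ := hpsw.sep
    obtain ⟨hVk1, hVx, c, hcase⟩ := Ed_elim hx
    have hh1 : (w₁ k).headI = h0 := by rw [h1]; rfl
    have hh2 : (w₂ k).headI = h0 := by rw [h2]; rfl
    rcases hcase with hxc | hxp
    · -- x is a child of `w₁ k`: match it with the corresponding child of `w₂ k`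
      obtain ⟨-, hinv⟩ := Vd_cons (hxc ▸ hVx)
      rcases hinv with h | ⟨j, hj1, hj2, hlt, hcp⟩
      · rw [h1] at h; simp at h
      have hlt2 : (w₂ k).length < 2 * d := by
        have hb := (hL2 k le_rfl).2
        have hc := hpsw.klen
        omega
      have hne2 : w₂ k ≠ [] := by rw [h2]; simp
      refine hsep (childPair (w₂ k) j :: w₂ k)
        (Ed_intro hVk2 (Vd_child hVk2 hne2 hlt2 hj1 hj2)
          (childPair (w₂ k) j) (Or.inl rfl)) ?_
      rw [hxc, outPort_up, outPort_up, hcp]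
      exact congrArg Prod.snd
        (childPair_congr (hh1.trans hh2.symm) (hpar k le_rfl) j)
    · -- x is the parent of `w₁ k`: match it with the parent of `w₂ k`
      have e : w₂ k = h0 :: (σ' ++ w₂ ℓ) := h2
      refine hsep (σ' ++ w₂ ℓ)
        (Ed_intro hVk2 (Vd_cons (e ▸ hVk2)).1 h0 (Or.inr e)) ?_
      rw [hxp, outPort_down, e, outPort_down]
      have hch : c = h0 := by
        have e' : c :: x = h0 :: (σ' ++ w₁ ℓ) := by rw [← hxp, h1]
        injection e' with e'' _
      rw [hch]
  · -- Case B: both walks return simultaneously; cut out the loop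
    have hδ1 : 1 ≤ t - ℓ := by omega
    refine absurd (hmin (k - (t - ℓ))
      (fun j => if j ≤ ℓ then w₁ j else w₁ (j + (t - ℓ)))
      (fun j => if j ≤ ℓ then w₂ j else w₂ (j + (t - ℓ))) ?_) (by omega)
    have hKeq : ∀ (w : ℕ → List Nd), w t = w ℓ →
        (if k - (t - ℓ) ≤ ℓ then w (k - (t - ℓ))
          else w (k - (t - ℓ) + (t - ℓ))) = w k := by
      intro w hw
      by_cases h : k - (t - ℓ) ≤ ℓ
      · rw [if_pos h]
        have hx1 : k - (t - ℓ) = ℓ := by omega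
        have hx2 : t = k := by omega
        rw [hx1, ← hw, hx2]
      · rw [if_neg h, show k - (t - ℓ) + (t - ℓ) = k by omega]
    constructor
    case sep =>
      simp only [hKeq w₁ ht3, hKeq w₂ ht4]
      exact hpsw.sep
    constructor
    · -- klen
      have := hpsw.klen; omega
    · -- walk₁
      intro j hj
      by_cases hb1 : j + 1 ≤ ℓ
      · simp only [if_pos (by omega : j ≤ ℓ), if_pos hb1]
        exact hpsw.walk₁ j (by omega)
      · by_cases hb2 : j ≤ ℓ
        · have hje : j = ℓ := by omega
          simp only [if_pos hb2, if_neg hb1]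
          rw [hje, ← ht3, show ℓ + 1 + (t - ℓ) = t + 1 by omega]
          exact hpsw.walk₁ t (by omega)
        · simp only [if_neg hb2, if_neg hb1]
          rw [show j + 1 + (t - ℓ) = (j + (t - ℓ)) + 1 by omega]
          exact hpsw.walk₁ (j + (t - ℓ)) (by omega)
    · -- walk₂
      intro j hj
      by_cases hb1 : j + 1 ≤ ℓ
      · simp only [if_pos (by omega : j ≤ ℓ), if_pos hb1]
        exact hpsw.walk₂ j (by omega)
      · by_cases hb2 : j ≤ ℓ
        · have hje : j = ℓ := by omega
          simp only [if_pos hb2, if_neg hb1]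
          rw [hje, ← ht4, show ℓ + 1 + (t - ℓ) = t + 1 by omega]
          exact hpsw.walk₂ t (by omega)
        · simp only [if_neg hb2, if_neg hb1]
          rw [show j + 1 + (t - ℓ) = (j + (t - ℓ)) + 1 by omega]
          exact hpsw.walk₂ (j + (t - ℓ)) (by omega)
    · -- start₁
      simp only [if_pos (Nat.zero_le ℓ)]
      exact hpsw.start₁
    · -- start₂
      simp only [if_pos (Nat.zero_le ℓ)]
      exact hpsw.start₂
    · -- compat
      intro j hj1 hj2
      by_cases hb1 : j ≤ ℓ
      · simp only [if_pos hb1, if_pos (by omega : j - 1 ≤ ℓ)]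
        exact hpsw.compat j hj1 (by omega)
      · by_cases hb2 : j - 1 ≤ ℓ
        · have hje : j = ℓ + 1 := by omega
          subst hje
          have g1 : ∀ (w : ℕ → List Nd),
              (if ℓ + 1 ≤ ℓ then w (ℓ + 1) else w (ℓ + 1 + (t - ℓ))) = w (t + 1) := by
            intro w
            rw [if_neg hb1, show ℓ + 1 + (t - ℓ) = t + 1 by omega]
          have g2 : ∀ (w : ℕ → List Nd), w t = w ℓ →
              (if ℓ + 1 - 1 ≤ ℓ then w (ℓ + 1 - 1)
                else w (ℓ + 1 - 1 + (t - ℓ))) = w t := by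
            intro w hw
            rw [if_pos hb2]
            simpa using hw.symm
          simp only [g1, g2 w₁ ht3, g2 w₂ ht4]
          have hc := hpsw.compat (t + 1) (by omega) (by omega)
          simpa only [Nat.add_sub_cancel] using hc
        · simp only [if_neg hb1, if_neg hb2]
          rw [show j - 1 + (t - ℓ) = (j + (t - ℓ)) - 1 by omega]
          exact hpsw.compat (j + (t - ℓ)) (by omega) (by omega)

end Paper
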